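/- Let $U \in C^2([0,L],\mathbb{R})$, $k \in \mathbb{R}$, $s \in \mathbb{C}$ with $\mathrm{Re}(s) \ne 0$, and set $\gamma(z) = s + i k U(z)$. Suppose $u \in C^2([0,L],\mathbb{C})$ is not identically zero, satisfies $u(0) = u(L) = 0$, and solves the Rayleigh stability equation $-u'' + k^2 u + (i k U''(z)/\gamma(z)) u = 0$ on $[0,L]$. Then the function $U''$ changes sign on $[0,L]$, i.e. there exist $z_1, z_2 \in [0,L]$ with $U''(z_1) > 0$ and $U''(z_2) < 0$. -/

import Mathlib

open Set MeasureTheory intervalIntegral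

lemma my_c2_bits {F : Type*} [NormedAddCommGroup F] [NormedSpace ℝ F] {f : ℝ → F}
    (hf : ContDiff ℝ 2 f) :
    Differentiable ℝ f ∧ Differentiable ℝ (deriv f) ∧ Continuous (deriv (deriv f)) := by
  have h2 : ContDiff ℝ ((1 : ℕ) + 1) f := by exact_mod_cast hf
  rw [contDiff_succ_iff_deriv] at h2
  have h1 := contDiff_one_iff_deriv.mp h2.2.2
  exact ⟨h2.1, h1.1, h1.2⟩

lemma my_zero_of_integral {L : ℝ} (hL : 0 < L) {g : ℝ → ℝ} (hg : Continuous g)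
    (hnn : ∀ z ∈ Icc (0:ℝ) L, 0 ≤ g z) (hint : ∫ z in (0:ℝ)..L, g z = 0) :
    ∀ z ∈ Icc (0:ℝ) L, g z = 0 := by
  have hi := hg.intervalIntegrable (μ := volume) 0 L
  have hae : 0 ≤ᵐ[volume.restrict (Ioc 0 L)] g :=
    (ae_restrict_iff' measurableSet_Ioc).mpr (Filter.Eventually.of_forall
      fun x hx => hnn x ⟨hx.1.le, hx.2⟩)
  rw [intervalIntegral.integral_eq_zero_iff_of_le_of_nonneg_ae hL.le hae hi] at hint
  have hicc : g =ᵐ[volume.restrict (Icc 0 L)] 0 := by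
    rwa [← Measure.restrict_congr_set Ioc_ae_eq_Icc]
  exact Measure.eqOn_Icc_of_ae_eq volume hL.ne hicc hg.continuousOn continuousOn_const

lemma my_intervalIntegral_ofReal (f : ℝ → ℝ) (a b : ℝ) :
    (∫ x in a..b, (f x : ℂ)) = ((∫ x in a..b, f x : ℝ) : ℂ) := by
  exact_mod_cast RCLike.intervalIntegral_ofReal (𝕜 := ℂ) (f := f) (μ := volume) (a := a) (b := b)

lemma my_aux
    (L : ℝ) (hL : 0 < L) (U : ℝ → ℝ) (hU : ContDiff ℝ 2 U)
    (k : ℝ) (s : ℂ) (hs : s.re ≠ 0)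
    (u : ℝ → ℂ) (hu : ContDiff ℝ 2 u)
    (hne : ∃ z ∈ Icc (0:ℝ) L, u z ≠ 0)
    (hbc0 : u 0 = 0) (hbcL : u L = 0)
    (heq : ∀ z ∈ Icc (0:ℝ) L,
      -(deriv (deriv u) z) + (k^2 : ℂ) * u z
        + (Complex.I * k * ((deriv (deriv U) z : ℝ) : ℂ) / (s + Complex.I * k * (U z : ℂ))) * u z = 0)
    (hsign : (∀ z ∈ Icc (0:ℝ) L, 0 ≤ deriv (deriv U) z) ∨
      (∀ z ∈ Icc (0:ℝ) L, deriv (deriv U) z ≤ 0)) :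
    False := by
  obtain ⟨huD, hu'D, hu''C⟩ := my_c2_bits hu
  obtain ⟨hUD, hU'D, hU''C⟩ := my_c2_bits hU
  have huC : Continuous u := huD.continuous
  have hu'C : Continuous (deriv u) := hu'D.continuous
  set γ : ℝ → ℂ := fun z => s + Complex.I * k * (U z : ℂ) with hγdef
  have hγC : Continuous γ :=
    continuous_const.add (continuous_const.mul (Complex.continuous_ofReal.comp hUD.continuous))
  have hγre : ∀ z, (γ z).re = s.re := fun z => by simp [hγdef]
  have hγne : ∀ z, γ z ≠ 0 := fun z h => hs (by rw [← hγre z, h, Complex.zero_re])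
  have hγpos : ∀ z, 0 < Complex.normSq (γ z) := fun z => Complex.normSq_pos.mpr (hγne z)
  -- continuity of pieces
  have hqC : Continuous fun z => Complex.normSq (u z) := Complex.continuous_normSq.comp huC
  have hq'C : Continuous fun z => Complex.normSq (deriv u z) :=
    Complex.continuous_normSq.comp hu'C
  have hcjC : Continuous fun w : ℂ => (starRingEnd ℂ) w := Complex.continuous_conj
  have hfC : Continuous fun z =>
      Complex.I * k * ((deriv (deriv U) z : ℝ) : ℂ) / γ z * (Complex.normSq (u z) : ℂ) := by
    exact (((continuous_const.mul (Complex.continuous_ofReal.comp hU''C)).div hγC hγne).mul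
      (Complex.continuous_ofReal.comp hqC))
  -- FTC
  have hderiv : ∀ z ∈ uIcc (0:ℝ) L, HasDerivAt (fun z => (starRingEnd ℂ) (u z) * deriv u z)
      ((starRingEnd ℂ) (deriv u z) * deriv u z + (starRingEnd ℂ) (u z) * deriv (deriv u) z) z :=
    fun z _ => ((huD z).hasDerivAt.star.mul (hu'D z).hasDerivAt)
  have hw'C : Continuous fun z =>
      (starRingEnd ℂ) (deriv u z) * deriv u z + (starRingEnd ℂ) (u z) * deriv (deriv u) z :=
    ((hcjC.comp hu'C).mul hu'C).add ((hcjC.comp huC).mul hu''C)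
  have key : (∫ z in (0:ℝ)..L,
      ((starRingEnd ℂ) (deriv u z) * deriv u z + (starRingEnd ℂ) (u z) * deriv (deriv u) z)) = 0 := by
    rw [integral_eq_sub_of_hasDerivAt hderiv (hw'C.intervalIntegrable 0 L)]
    simp [hbc0, hbcL]
  -- pointwise rewrite
  have hconjmul : ∀ w : ℂ, (starRingEnd ℂ) w * w = (Complex.normSq w : ℂ) := fun w => by
    rw [mul_comm, Complex.mul_conj]
  have hptw : EqOn
      (fun z => (starRingEnd ℂ) (deriv u z) * deriv u z + (starRingEnd ℂ) (u z) * deriv (deriv u) z)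
      (fun z => (Complex.normSq (deriv u z) : ℂ) + ((k^2 : ℂ) * (Complex.normSq (u z) : ℂ)
        + Complex.I * k * ((deriv (deriv U) z : ℝ) : ℂ) / γ z * (Complex.normSq (u z) : ℂ)))
      (uIcc (0:ℝ) L) := by
    intro z hz
    rw [uIcc_of_le hL.le] at hz
    have h1 := heq z hz
    have h2 : deriv (deriv u) z = (k^2 : ℂ) * u z
        + Complex.I * k * ((deriv (deriv U) z : ℝ) : ℂ) / γ z * u z := by
      linear_combination -h1
    simp only
    rw [h2, ← hconjmul (deriv u z), ← hconjmul (u z)]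
    ring
  rw [integral_congr hptw] at key
  set A := ∫ z in (0:ℝ)..L, Complex.normSq (deriv u z) with hA
  set B := ∫ z in (0:ℝ)..L, Complex.normSq (u z) with hB
  set C := ∫ z in (0:ℝ)..L,
    Complex.I * k * ((deriv (deriv U) z : ℝ) : ℂ) / γ z * (Complex.normSq (u z) : ℂ) with hC
  have i1 : IntervalIntegrable (fun z => ((Complex.normSq (deriv u z) : ℝ) : ℂ)) volume 0 L := by
    apply Continuous.intervalIntegrable
    exact Complex.continuous_ofReal.comp hq'C
  have i2 : IntervalIntegrable (fun z => (k^2 : ℂ) * ((Complex.normSq (u z) : ℝ) : ℂ)) volume 0 L := by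
    apply Continuous.intervalIntegrable
    exact continuous_const.mul (Complex.continuous_ofReal.comp hqC)
  have i3 : IntervalIntegrable (fun z =>
      Complex.I * k * ((deriv (deriv U) z : ℝ) : ℂ) / γ z * (Complex.normSq (u z) : ℂ)) volume 0 L :=
    hfC.intervalIntegrable 0 L
  have key2 : (A : ℂ) + ((k^2 : ℂ) * (B : ℂ) + C) = 0 := by
    rw [← key, integral_add i1 (i2.add i3), integral_add i2 i3,
      intervalIntegral.integral_const_mul, my_intervalIntegral_ofReal,
      my_intervalIntegral_ofReal, ← hA, ← hB]
  have hA0 : 0 ≤ A := intervalIntegral.integral_nonneg hL.le fun z _ => Complex.normSq_nonneg _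
  have hB0 : 0 ≤ B := intervalIntegral.integral_nonneg hL.le fun z _ => Complex.normSq_nonneg _
  -- the key pointwise vanishing of the U'' term
  have hUq : ∀ z ∈ Icc (0:ℝ) L,
      Complex.I * k * ((deriv (deriv U) z : ℝ) : ℂ) / γ z * (Complex.normSq (u z) : ℂ) = 0 := by
    rcases eq_or_ne k 0 with hk | hk
    · intro z _; simp [hk]
    · have hCim : C.im = 0 := by
        have := congrArg Complex.im key2
        simpa [pow_two, Complex.mul_im, Complex.add_im] using this
      have him : ∀ z, (Complex.I * k * ((deriv (deriv U) z : ℝ) : ℂ) / γ z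
          * (Complex.normSq (u z) : ℂ)).im
          = (k * s.re) * (deriv (deriv U) z * Complex.normSq (u z) / Complex.normSq (γ z)) := by
        intro z
        rw [mul_comm _ ((Complex.normSq (u z) : ℂ)), ← mul_div_assoc, Complex.div_im]
        simp [Complex.mul_im, Complex.mul_re, hγre]
        ring
      have e1 : (∫ z in (0:ℝ)..L,
          (k * s.re) * (deriv (deriv U) z * Complex.normSq (u z) / Complex.normSq (γ z))) = C.im := by
        have hint := integral_im (μ := volume.restrict (Ioc (0:ℝ) L)) hfC.integrableOn_Ioc
        simp only [RCLike.im_to_complex] at hint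
        rw [hC, intervalIntegral.integral_of_le hL.le, intervalIntegral.integral_of_le hL.le,
          ← hint]
        exact integral_congr_ae (Filter.Eventually.of_forall fun z => (him z).symm)
      rw [hCim, intervalIntegral.integral_const_mul] at e1
      have hks : k * s.re ≠ 0 := mul_ne_zero hk hs
      have hg0 : (∫ z in (0:ℝ)..L,
          deriv (deriv U) z * Complex.normSq (u z) / Complex.normSq (γ z)) = 0 :=
        (mul_eq_zero.mp e1).resolve_left hks
      have hgC : Continuous fun z =>
          deriv (deriv U) z * Complex.normSq (u z) / Complex.normSq (γ z) :=
        (hU''C.mul hqC).div (Complex.continuous_normSq.comp hγC) fun z => (hγpos z).ne'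
      have hzero : ∀ z ∈ Icc (0:ℝ) L,
          deriv (deriv U) z * Complex.normSq (u z) / Complex.normSq (γ z) = 0 := by
        rcases hsign with hpos | hneg
        · exact my_zero_of_integral hL hgC
            (fun z hz => div_nonneg (mul_nonneg (hpos z hz) (Complex.normSq_nonneg _)) (hγpos z).le)
            hg0
        · intro z hz
          have := my_zero_of_integral hL hgC.neg
            (fun z hz => by
              have : deriv (deriv U) z * Complex.normSq (u z) / Complex.normSq (γ z) ≤ 0 :=
                div_nonpos_of_nonpos_of_nonneg
                  (mul_nonpos_of_nonpos_of_nonneg (hneg z hz) (Complex.normSq_nonneg _))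
                  (hγpos z).le
              simp only [Pi.neg_apply]
              linarith)
            (by simp only [Pi.neg_apply]; rw [intervalIntegral.integral_neg, hg0, neg_zero]) z hz
          simp only [Pi.neg_apply] at this
          linarith [this]
      intro z hz
      have h4 : deriv (deriv U) z * Complex.normSq (u z) = 0 := by
        have := hzero z hz
        field_simp [(hγpos z).ne'] at this
        rw [mul_zero] at this
        exact this
      have h5 : ((deriv (deriv U) z : ℝ) : ℂ) * ((Complex.normSq (u z) : ℝ) : ℂ) = 0 := by
        exact_mod_cast congrArg (fun t : ℝ => (t : ℂ)) h4
      calc Complex.I * k * ((deriv (deriv U) z : ℝ) : ℂ) / γ z * (Complex.normSq (u z) : ℂ)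
          = Complex.I * k / γ z *
            (((deriv (deriv U) z : ℝ) : ℂ) * ((Complex.normSq (u z) : ℝ) : ℂ)) := by ring
        _ = 0 := by rw [h5, mul_zero]
  -- conclude C = 0
  have hC0 : C = 0 := by
    rw [hC, intervalIntegral.integral_congr (g := fun _ => (0:ℂ))
      (fun z hz => hUq z (by rwa [uIcc_of_le hL.le] at hz))]
    simp
  rw [hC0, add_zero] at key2
  have key3 : A + k^2 * B = 0 := by
    have := congrArg Complex.re key2
    simpa [pow_two, Complex.mul_re] using this
  have hA00 : A = 0 := by nlinarith [sq_nonneg k]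
  have hu'zero : ∀ z ∈ Icc (0:ℝ) L, deriv u z = 0 := by
    intro z hz
    have := my_zero_of_integral hL hq'C (fun z _ => Complex.normSq_nonneg _) hA00 z hz
    exact Complex.normSq_eq_zero.mp this
  obtain ⟨z, hz, hnz⟩ := hne
  apply hnz
  have hftc : (∫ t in (0:ℝ)..z, deriv u t) = u z - u 0 :=
    integral_eq_sub_of_hasDerivAt (fun t _ => (huD t).hasDerivAt) (hu'C.intervalIntegrable 0 z)
  have hzero : (∫ t in (0:ℝ)..z, deriv u t) = 0 := by
    rw [intervalIntegral.integral_congr (g := fun _ => (0:ℂ)) (fun t ht => by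
      rw [uIcc_of_le hz.1] at ht
      exact hu'zero t ⟨ht.1, ht.2.trans hz.2⟩)]
    simp
  rw [hzero, hbc0, sub_zero] at hftc
  exact hftc.symm

theorem rayleigh_inflection_point_criterion
    (L : ℝ) (hL : 0 < L) (U : ℝ → ℝ) (hU : ContDiff ℝ 2 U)
    (k : ℝ) (s : ℂ) (hs : s.re ≠ 0)
    (u : ℝ → ℂ) (hu : ContDiff ℝ 2 u)
    (hne : ∃ z ∈ Icc (0:ℝ) L, u z ≠ 0)
    (hbc0 : u 0 = 0) (hbcL : u L = 0)
    (heq : ∀ z ∈ Icc (0:ℝ) L,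
      -(deriv (deriv u) z) + (k^2 : ℂ) * u z
        + (Complex.I * k * ((deriv (deriv U) z : ℝ) : ℂ) / (s + Complex.I * k * (U z : ℂ))) * u z = 0) :
    (∃ z₁ ∈ Icc (0:ℝ) L, 0 < deriv (deriv U) z₁) ∧
    (∃ z₂ ∈ Icc (0:ℝ) L, deriv (deriv U) z₂ < 0) := by
  constructor
  · by_contra h
    push_neg at h
    exact my_aux L hL U hU k s hs u hu hne hbc0 hbcL heq (Or.inr h)
  · by_contra h
    push_neg at h
    exact my_aux L hL U hU k s hs u hu hne hbc0 hbcL heq (Or.inl h)
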